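/- Let m ≥ 1, and let λ, ν ∈ ℂ be such that λ + pν ≠ 0 for all integers p with |p| ≤ m − 1. Then the element λ·1 + ν·(s_{12} + s_{13} + ⋯ + s_{1m}) is invertible in the group algebra ℂ[S_m]. -/

import Mathlib

open Finset Equiv MonoidAlgebra
open Fin.NatCast

abbrev JMA (m : ℕ) := MonoidAlgebra ℂ (Equiv.Perm (Fin (m+1)))

noncomputable def RR (m k : ℕ) : JMA m :=
  ∑ ℓ ∈ Finset.univ.filter (fun ℓ : Fin (m+1) => k < ℓ.val),
    MonoidAlgebra.of ℂ (Equiv.Perm (Fin (m+1))) (Equiv.swap (k : Fin (m+1)) ℓ)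

noncomputable def TT (m j : ℕ) : JMA m :=
  ∑ p ∈ (Finset.univ ×ˢ Finset.univ).filter
      (fun p : Fin (m+1) × Fin (m+1) => j ≤ p.1.val ∧ j ≤ p.2.val ∧ p.1 ≠ p.2),
    MonoidAlgebra.of ℂ (Equiv.Perm (Fin (m+1))) (Equiv.swap p.1 p.2)

lemma mul_swap_eq {α : Type*} [DecidableEq α] (σ : Equiv.Perm α) (a b : α) :
    σ * Equiv.swap a b = Equiv.swap (σ a) (σ b) * σ := by
  rw [Equiv.swap_apply_apply]; group

lemma swap_conj_comm {α : Type*} [DecidableEq α] (σ : Equiv.Perm α) (a b : α)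
    (ha : σ a = a) (hb : σ b = b) : σ * Equiv.swap a b = Equiv.swap a b * σ := by
  rw [mul_swap_eq, ha, hb]

lemma conj_comm_TT (m j : ℕ) (σ : Equiv.Perm (Fin (m+1)))
    (hσ : ∀ x : Fin (m+1), x.val < j → σ x = x) :
    MonoidAlgebra.of ℂ (Equiv.Perm (Fin (m+1))) σ * TT m j
      = TT m j * MonoidAlgebra.of ℂ (Equiv.Perm (Fin (m+1))) σ := by
  have hpres : ∀ x : Fin (m+1), j ≤ x.val → j ≤ (σ x).val := by
    intro x hx
    by_contra hc
    push_neg at hc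
    have h1 : σ (σ x) = σ x := hσ _ hc
    have h2 : σ x = x := σ.injective h1
    rw [h2] at hc; omega
  have hpres' : ∀ x : Fin (m+1), j ≤ x.val → j ≤ (σ⁻¹ x).val := by
    intro x hx
    by_contra hc
    push_neg at hc
    have h1 : σ (σ⁻¹ x) = σ⁻¹ x := hσ _ hc
    rw [← Equiv.Perm.mul_apply, mul_inv_cancel, Equiv.Perm.one_apply] at h1
    rw [← h1] at hc; omega
  unfold TT
  rw [Finset.mul_sum, Finset.sum_mul]
  simp only [← map_mul]
  refine Finset.sum_nbij' (fun p => (σ p.1, σ p.2)) (fun p => (σ⁻¹ p.1, σ⁻¹ p.2)) ?_ ?_ ?_ ?_ ?_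
  · rintro ⟨a, b⟩ hab
    simp only [Finset.mem_filter, Finset.mem_product, Finset.mem_univ, true_and] at hab ⊢
    exact ⟨hpres a hab.1, hpres b hab.2.1, fun hc => hab.2.2 (σ.injective hc)⟩
  · rintro ⟨a, b⟩ hab
    simp only [Finset.mem_filter, Finset.mem_product, Finset.mem_univ, true_and] at hab ⊢
    exact ⟨hpres' a hab.1, hpres' b hab.2.1, fun hc => hab.2.2 ((σ⁻¹).injective hc)⟩
  · rintro ⟨a, b⟩ _; simp
  · rintro ⟨a, b⟩ _; simp
  · rintro ⟨a, b⟩ _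
    simp only
    rw [mul_swap_eq]

lemma RR_eq_zero (m k : ℕ) (hk : m ≤ k) : RR m k = 0 := by
  unfold RR
  apply Finset.sum_eq_zero
  intro ℓ hℓ
  rw [Finset.mem_filter] at hℓ
  have := ℓ.isLt
  omega

lemma TT_comm_RR (m j k : ℕ) (hjk : j ≤ k) : TT m j * RR m k = RR m k * TT m j := by
  rcases lt_or_ge k (m+1) with hk | hk
  · unfold RR
    rw [Finset.mul_sum, Finset.sum_mul]
    apply Finset.sum_congr rfl
    intro ℓ hℓ
    rw [Finset.mem_filter] at hℓ
    have hkv : ((k : Fin (m+1))).val = k := Fin.val_cast_of_lt hk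
    refine (conj_comm_TT m j _ ?_).symm
    intro x hx
    apply Equiv.swap_apply_of_ne_of_ne
    · intro hc; rw [hc] at hx; omega
    · intro hc; rw [hc] at hx; omega
  · rw [RR_eq_zero m k (by omega), mul_zero, zero_mul]

lemma TT_split (m k : ℕ) (hk : k < m+1) : TT m k = TT m (k+1) + (RR m k + RR m k) := by
  classical
  set kF : Fin (m+1) := (k : Fin (m+1)) with hkF
  have hkv : kF.val = k := Fin.val_cast_of_lt hk
  set f : Fin (m+1) × Fin (m+1) → JMA m :=
    fun p => MonoidAlgebra.of ℂ (Equiv.Perm (Fin (m+1))) (Equiv.swap p.1 p.2) with hf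
  set Sk := (Finset.univ ×ˢ Finset.univ).filter
      (fun p : Fin (m+1) × Fin (m+1) => k ≤ p.1.val ∧ k ≤ p.2.val ∧ p.1 ≠ p.2) with hSk
  have hsplit := Finset.sum_filter_add_sum_filter_not Sk
      (fun p => p.1.val = k ∨ p.2.val = k) f
  have hS1 : Sk.filter (fun p => ¬(p.1.val = k ∨ p.2.val = k))
      = (Finset.univ ×ˢ Finset.univ).filter
      (fun p : Fin (m+1) × Fin (m+1) => k+1 ≤ p.1.val ∧ k+1 ≤ p.2.val ∧ p.1 ≠ p.2) := by
    ext p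
    simp only [hSk, Finset.mem_filter, Finset.mem_product, Finset.mem_univ, true_and]
    constructor
    · rintro ⟨⟨h1, h2, h3⟩, h4⟩; exact ⟨by omega, by omega, h3⟩
    · rintro ⟨h1, h2, h3⟩; exact ⟨⟨by omega, by omega, h3⟩, by omega⟩
  have hD := Finset.sum_filter_add_sum_filter_not (Sk.filter (fun p => p.1.val = k ∨ p.2.val = k))
      (fun p => p.1.val = k) f
  have hD1 : ∑ p ∈ (Sk.filter (fun p => p.1.val = k ∨ p.2.val = k)).filter
      (fun p => p.1.val = k), f p = RR m k := by
    unfold RR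
    refine Finset.sum_nbij' (fun p => p.2) (fun ℓ => (kF, ℓ)) ?_ ?_ ?_ ?_ ?_
    · rintro ⟨a, b⟩ hab
      simp only [hSk, Finset.mem_filter, Finset.mem_product, Finset.mem_univ, true_and] at hab ⊢
      obtain ⟨⟨⟨h1, h2, h3⟩, h4⟩, h5⟩ := hab
      have : a.val ≠ b.val := fun hc => h3 (Fin.ext hc)
      omega
    · intro ℓ hℓ
      simp only [hSk, Finset.mem_filter, Finset.mem_product, Finset.mem_univ, true_and] at hℓ ⊢
      refine ⟨⟨⟨by omega, by omega, ?_⟩, by omega⟩, by omega⟩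
      intro hc
      have : kF.val = ℓ.val := by rw [hc]
      omega
    · rintro ⟨a, b⟩ hab
      simp only [hSk, Finset.mem_filter, Finset.mem_product, Finset.mem_univ, true_and] at hab
      have : a = kF := Fin.ext (by omega)
      simp [this]
    · intro ℓ hℓ; rfl
    · rintro ⟨a, b⟩ hab
      simp only [hSk, Finset.mem_filter, Finset.mem_product, Finset.mem_univ, true_and] at hab
      have : a = kF := Fin.ext (by omega)
      simp [hf, this]; rfl
  have hD2 : ∑ p ∈ (Sk.filter (fun p => p.1.val = k ∨ p.2.val = k)).filter
      (fun p => ¬ p.1.val = k), f p = RR m k := by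
    unfold RR
    refine Finset.sum_nbij' (fun p => p.1) (fun ℓ => (ℓ, kF)) ?_ ?_ ?_ ?_ ?_
    · rintro ⟨a, b⟩ hab
      simp only [hSk, Finset.mem_filter, Finset.mem_product, Finset.mem_univ, true_and] at hab ⊢
      omega
    · intro ℓ hℓ
      simp only [hSk, Finset.mem_filter, Finset.mem_product, Finset.mem_univ, true_and] at hℓ ⊢
      refine ⟨⟨⟨by omega, by omega, ?_⟩, by omega⟩, by omega⟩
      intro hc
      have : ℓ.val = kF.val := by rw [hc]
      omega
    · rintro ⟨a, b⟩ hab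
      simp only [hSk, Finset.mem_filter, Finset.mem_product, Finset.mem_univ, true_and] at hab
      have : b = kF := Fin.ext (by omega)
      simp [this]
    · intro ℓ hℓ; rfl
    · rintro ⟨a, b⟩ hab
      simp only [hSk, Finset.mem_filter, Finset.mem_product, Finset.mem_univ, true_and] at hab
      have hb : b = kF := Fin.ext (by omega)
      simp [hf, hb, Equiv.swap_comm]; rfl
  have hTTk : TT m k = ∑ p ∈ Sk, f p := rfl
  have hTTk1 : TT m (k+1) = ∑ p ∈ Sk.filter (fun p => ¬(p.1.val = k ∨ p.2.val = k)), f p := by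
    rw [hS1]; rfl
  rw [hTTk, ← hsplit, hTTk1, ← hD, hD1, hD2]
  abel

lemma RR_comm_aux (m : ℕ) (j k : ℕ) (hj : j < m+1) (hk : k < m+1) (hjk : j ≤ k) :
    RR m j * RR m k = RR m k * RR m j := by
  rcases eq_or_lt_of_le hjk with rfl | hlt
  · rfl
  · have h1 := TT_comm_RR m j k hjk
    have h2 := TT_comm_RR m (j+1) k (by omega)
    have hs := TT_split m j hj
    rw [hs] at h1
    rw [add_mul, mul_add, h2] at h1
    have h3 := add_left_cancel h1
    rw [add_mul, mul_add] at h3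
    have h4 : (2 : ℂ) • (RR m j * RR m k) = (2 : ℂ) • (RR m k * RR m j) := by
      rw [two_smul, two_smul]; exact h3
    exact smul_right_injective _ (two_ne_zero) h4

lemma RR_comm (m : ℕ) (j k : ℕ) (hj : j < m+1) (hk : k < m+1) :
    RR m j * RR m k = RR m k * RR m j := by
  rcases le_total j k with hjk | hjk
  · exact RR_comm_aux m j k hj hk hjk
  · exact (RR_comm_aux m k j hk hj hjk).symm

lemma RR_rec (m k : ℕ) (hk : k + 1 < m + 1) :
    RR m k = MonoidAlgebra.of ℂ (Equiv.Perm (Fin (m+1)))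
        (Equiv.swap (k : Fin (m+1)) ((k+1 : ℕ) : Fin (m+1)))
      * RR m (k+1)
      * MonoidAlgebra.of ℂ (Equiv.Perm (Fin (m+1)))
        (Equiv.swap (k : Fin (m+1)) ((k+1 : ℕ) : Fin (m+1)))
      + MonoidAlgebra.of ℂ (Equiv.Perm (Fin (m+1)))
        (Equiv.swap (k : Fin (m+1)) ((k+1 : ℕ) : Fin (m+1))) := by
  set kF : Fin (m+1) := (k : Fin (m+1)) with hkF
  set k1F : Fin (m+1) := ((k+1 : ℕ) : Fin (m+1)) with hk1F
  have hkv : kF.val = k := Fin.val_cast_of_lt (by omega)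
  have hk1v : k1F.val = k + 1 := Fin.val_cast_of_lt hk
  set s : Equiv.Perm (Fin (m+1)) := Equiv.swap kF k1F with hsdef
  have hRHS : MonoidAlgebra.of ℂ (Equiv.Perm (Fin (m+1))) s * RR m (k+1)
      * MonoidAlgebra.of ℂ (Equiv.Perm (Fin (m+1))) s
      = ∑ ℓ ∈ Finset.univ.filter (fun ℓ : Fin (m+1) => k+1 < ℓ.val),
          MonoidAlgebra.of ℂ (Equiv.Perm (Fin (m+1))) (Equiv.swap kF ℓ) := by
    unfold RR
    rw [Finset.mul_sum, Finset.sum_mul]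
    apply Finset.sum_congr rfl
    intro ℓ hℓ
    rw [Finset.mem_filter] at hℓ
    rw [← map_mul, ← map_mul]
    congr 1
    have hℓne1 : ℓ ≠ kF := fun hc => by rw [hc] at hℓ; omega
    have hℓne2 : ℓ ≠ k1F := fun hc => by rw [hc] at hℓ; omega
    calc s * Equiv.swap k1F ℓ * s = Equiv.swap (s k1F) (s ℓ) * s * s := by
          rw [mul_swap_eq s k1F ℓ]
      _ = Equiv.swap (s k1F) (s ℓ) := by rw [mul_assoc, Equiv.swap_mul_self, mul_one]
      _ = Equiv.swap kF ℓ := by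
          rw [hsdef, Equiv.swap_apply_right, Equiv.swap_apply_of_ne_of_ne hℓne1 hℓne2]
  rw [hRHS]
  unfold RR
  have hfil : Finset.univ.filter (fun ℓ : Fin (m+1) => k < ℓ.val)
      = insert k1F (Finset.univ.filter (fun ℓ : Fin (m+1) => k+1 < ℓ.val)) := by
    ext ℓ
    simp only [Finset.mem_filter, Finset.mem_insert, Finset.mem_univ, true_and]
    constructor
    · intro hℓ
      rcases Nat.lt_or_ge (k+1) ℓ.val with h | h
      · right; exact h
      · left; exact Fin.ext (by omega)
    · rintro (rfl | hℓ)
      · omega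
      · omega
  rw [hfil, Finset.sum_insert (by simp [Finset.mem_filter, hk1v])]
  rw [add_comm]

lemma of_swap_comm_RR (m k i : ℕ) (hki : k + 1 < i) (hi : i < m+1) :
    MonoidAlgebra.of ℂ (Equiv.Perm (Fin (m+1)))
        (Equiv.swap (k : Fin (m+1)) ((k+1 : ℕ) : Fin (m+1))) * RR m i
      = RR m i * MonoidAlgebra.of ℂ (Equiv.Perm (Fin (m+1)))
        (Equiv.swap (k : Fin (m+1)) ((k+1 : ℕ) : Fin (m+1))) := by
  have hkv : ((k : Fin (m+1))).val = k := Fin.val_cast_of_lt (by omega)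
  have hk1v : (((k+1:ℕ) : Fin (m+1))).val = k + 1 := Fin.val_cast_of_lt (by omega)
  have hiv : ((i : Fin (m+1))).val = i := Fin.val_cast_of_lt hi
  unfold RR
  rw [Finset.mul_sum, Finset.sum_mul]
  apply Finset.sum_congr rfl
  intro ℓ hℓ
  rw [Finset.mem_filter] at hℓ
  rw [← map_mul, ← map_mul]
  congr 1
  apply swap_conj_comm
  · apply Equiv.swap_apply_of_ne_of_ne
    · intro hc; rw [hc] at hiv; omega
    · intro hc; rw [hc] at hiv; omega
  · apply Equiv.swap_apply_of_ne_of_ne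
    · intro hc; rw [hc] at hℓ; omega
    · intro hc; rw [hc] at hℓ; omega

lemma key (m : ℕ) : ∀ (j k : ℕ), k + j = m → ∀ v : JMA m, v ≠ 0 → ∀ a : ℕ → ℂ,
    (∀ i, k ≤ i → i ≤ m → RR m i * v = a i • v) →
    ∃ p : ℤ, |p| ≤ (j : ℤ) ∧ a k = (p : ℂ) := by
  intro j
  induction j with
  | zero =>
    intro k hkm v hv a ha
    have h0 : RR m k * v = a k • v := ha k le_rfl (by omega)
    rw [RR_eq_zero m k (by omega), zero_mul] at h0
    rcases smul_eq_zero.mp h0.symm with h | h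
    · exact ⟨0, by simp, by rw [h]; simp⟩
    · exact absurd h hv
  | succ j IH =>
    intro k hkm v hv a ha
    have hk1m : k + 1 ≤ m := by omega
    set os : JMA m := MonoidAlgebra.of ℂ (Equiv.Perm (Fin (m+1)))
        (Equiv.swap ((k : ℕ) : Fin (m+1)) (((k+1:ℕ)) : Fin (m+1))) with hos
    have hss : os * os = 1 := by
      rw [hos, ← map_mul, Equiv.swap_mul_self, map_one]
    set u : JMA m := os * v with hudef
    have hu : os * u = v := by rw [hudef, ← mul_assoc, hss, one_mul]
    have hrec := RR_rec m k (by omega)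
    rw [← hos] at hrec
    have hak : RR m k * v = a k • v := ha k le_rfl (by omega)
    have hak1 : RR m (k+1) * v = a (k+1) • v := ha (k+1) (by omega) (by omega)
    have e2 : RR m k * u = a (k+1) • u + v := by
      rw [hrec, add_mul, mul_assoc (os * RR m (k+1)) os u, hu, mul_assoc, hak1,
        mul_smul_comm, ← hudef]
    have hA : os * RR m k = RR m (k+1) * os + 1 := by
      rw [hrec, mul_add, ← mul_assoc, ← mul_assoc, hss, one_mul]
    have e1 : RR m (k+1) * u = a k • u - v := by
      have h6 : os * RR m k * v = (RR m (k+1) * os + 1) * v := by rw [hA]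
      rw [mul_assoc, hak, mul_smul_comm, add_mul, one_mul, mul_assoc] at h6
      rw [← hudef] at h6
      rw [h6, add_sub_cancel_right]
    have e3 : ∀ i, k + 2 ≤ i → i ≤ m → RR m i * u = a i • u := by
      intro i hi him
      rw [hudef, ← mul_assoc, ← of_swap_comm_RR m k i (by omega) (by omega),
        mul_assoc, ha i (by omega) him, mul_smul_comm]
    by_cases hcase : ∃ c : ℂ, u = c • v
    · obtain ⟨c, hc⟩ := hcase
      have hcu : c • u = v := by
        rw [hudef, ← mul_smul_comm, ← hc]
        exact hu
      have h1 : (c * c) • v = v := by rw [mul_smul, ← hc, hcu]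
      have hcc : c * c = 1 := by
        have h2 : (c * c - 1) • v = 0 := by rw [sub_smul, one_smul, h1, sub_self]
        rcases smul_eq_zero.mp h2 with h | h
        · exact sub_eq_zero.mp h
        · exact absurd h hv
      have h4 : (c * a k) • v = (a (k+1) * c) • v + v := by
        have h4' : RR m k * (c • v) = a (k+1) • (c • v) + v := by rw [← hc]; exact e2
        rw [mul_smul_comm, hak, smul_smul, smul_smul] at h4'
        exact h4'
      have h5 : (c * a k - (a (k+1) * c + 1)) • v = 0 := by
        rw [sub_smul, add_smul, one_smul, h4, sub_self]
      have hco : c * a k = a (k+1) * c + 1 := by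
        rcases smul_eq_zero.mp h5 with h | h
        · exact sub_eq_zero.mp h
        · exact absurd h hv
      have hak' : a k = a (k+1) + c := by
        linear_combination c * hco + (a (k+1) - a k) * hcc
      obtain ⟨p, hp, hap⟩ := IH (k+1) (by omega) v hv a (fun i hi him => ha i (by omega) him)
      have hcpm : (c - 1) * (c + 1) = 0 := by linear_combination hcc
      rcases mul_eq_zero.mp hcpm with h | h
      · have hc1 : c = 1 := by linear_combination h
        refine ⟨p + 1, ?_, ?_⟩
        · rw [abs_le] at hp ⊢; push_cast; omega
        · rw [hak', hap, hc1]; push_cast; ring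
      · have hc1 : c = -1 := by linear_combination h
        refine ⟨p - 1, ?_, ?_⟩
        · rw [abs_le] at hp ⊢; push_cast; omega
        · rw [hak', hap, hc1]; push_cast; ring
    · push_neg at hcase
      by_cases heqa : a k = a (k+1)
      · obtain ⟨p, hp, hap⟩ := IH (k+1) (by omega) v hv a (fun i hi him => ha i (by omega) him)
        refine ⟨p, ?_, by rw [heqa, hap]⟩
        rw [abs_le] at hp ⊢; omega
      · have hne : a (k+1) - a k ≠ 0 := sub_ne_zero.mpr (Ne.symm heqa)
        set c : ℂ := (a (k+1) - a k)⁻¹ with hcdef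
        have hcc : c * (a (k+1) - a k) = 1 := inv_mul_cancel₀ hne
        set w : JMA m := u + c • v with hwdef
        have hw0 : w ≠ 0 := by
          intro hzero
          apply hcase (-c)
          have : u = -(c • v) := eq_neg_of_add_eq_zero_left hzero
          rw [this, neg_smul]
        have hw : RR m (k+1) * w = a k • w := by
          have h5 : RR m (k+1) * w = (a k • u - v) + c • (a (k+1) • v) := by
            rw [hwdef, mul_add, e1, mul_smul_comm, hak1]
          rw [h5, hwdef]
          match_scalars
          · ring
          · linear_combination hcc
        have ha' : ∀ i, k + 1 ≤ i → i ≤ m →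
            RR m i * w = (Function.update a (k+1) (a k)) i • w := by
          intro i hi him
          rcases eq_or_lt_of_le hi with rfl | hlt
          · rw [Function.update_self]; exact hw
          · rw [Function.update_of_ne (by omega)]
            rw [hwdef, mul_add, e3 i (by omega) him, mul_smul_comm, ha i (by omega) him]
            match_scalars <;> ring
        obtain ⟨p, hp, hap⟩ := IH (k+1) (by omega) w hw0 _ ha'
        rw [Function.update_self] at hap
        refine ⟨p, ?_, hap⟩
        rw [abs_le] at hp ⊢; omega

lemma exists_common_eig : ∀ (n : ℕ) (V : Type) [AddCommGroup V] [Module ℂ V]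
    [FiniteDimensional ℂ V] [Nontrivial V] (T : Fin n → Module.End ℂ V),
    (∀ i j, Commute (T i) (T j)) →
    ∃ (v : V) (μ : Fin n → ℂ), v ≠ 0 ∧ ∀ i, T i v = μ i • v := by
  intro n
  induction n with
  | zero =>
    intro V _ _ _ _ T _
    obtain ⟨v, hv⟩ := exists_ne (0 : V)
    exact ⟨v, Fin.elim0, hv, fun i => i.elim0⟩
  | succ n IH =>
    intro V _ _ _ _ T hT
    obtain ⟨μ₀, hμ₀⟩ := Module.End.exists_eigenvalue (T 0)
    set E := Module.End.eigenspace (T 0) μ₀ with hE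
    have hEne : Nontrivial E := by
      apply Submodule.nontrivial_iff_ne_bot.mpr
      exact hμ₀
    have hmap : ∀ (i : Fin n) (x : V), x ∈ E → T i.succ x ∈ E := by
      intro i x hx
      rw [hE, Module.End.mem_eigenspace_iff] at hx ⊢
      have hcomm := hT 0 i.succ
      have := DFunLike.congr_fun hcomm x
      simp only [Module.End.mul_apply] at this
      rw [this, hx, map_smul]
    set T' : Fin n → Module.End ℂ E := fun i => (T i.succ).restrict (hmap i) with hT'
    have hT'comm : ∀ i j, Commute (T' i) (T' j) := by
      intro i j
      show T' i * T' j = T' j * T' i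
      refine LinearMap.ext fun x => Subtype.ext ?_
      have hcf := DFunLike.congr_fun (hT i.succ j.succ) (x : V)
      simp only [Module.End.mul_apply] at hcf
      simp only [hT', Module.End.mul_apply, LinearMap.restrict_coe_apply]
      exact hcf
    obtain ⟨v, μ, hv0, hvei⟩ := IH E T' hT'comm
    refine ⟨(v : V), Fin.cons μ₀ μ, ?_, ?_⟩
    · intro hc
      exact hv0 (Subtype.ext hc)
    · intro i
      refine Fin.cases ?_ ?_ i
      · rw [Fin.cons_zero]
        exact Module.End.mem_eigenspace_iff.mp v.2
      · intro i
        rw [Fin.cons_succ]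
        simpa [hT', LinearMap.restrict_coe_apply] using congrArg Subtype.val (hvei i)

/-- Invertibility of `λ·1 + ν·(s₁₂ + ⋯ + s₁ₘ)` in `ℂ[S_m]` when `λ + pν ≠ 0` for
all integers `p` with `|p| ≤ m − 1`.  (Here the symmetric group has `m + 1 ≥ 1`
letters, so the paper's `m` is `m + 1` and the bound `m − 1` becomes `m`.) -/
theorem jucys_murphy_invertible (m : ℕ) (lam nu : ℂ)
    (h : ∀ p : ℤ, |p| ≤ (m : ℤ) → lam + (p : ℂ) * nu ≠ 0) :
    IsUnit (lam • (1 : MonoidAlgebra ℂ (Equiv.Perm (Fin (m + 1)))) +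
      nu • ∑ ℓ ∈ Finset.univ.erase (0 : Fin (m + 1)),
        MonoidAlgebra.of ℂ (Equiv.Perm (Fin (m + 1))) (Equiv.swap 0 ℓ)) := by
  classical
  haveI : FiniteDimensional ℂ (JMA m) :=
    Module.Finite.equiv (MonoidAlgebra.coeffLinearEquiv (R := ℂ) (S := ℂ) (M := Equiv.Perm (Fin (m+1)))).symm
  have hJ : RR m 0 = ∑ ℓ ∈ Finset.univ.erase (0 : Fin (m + 1)),
      MonoidAlgebra.of ℂ (Equiv.Perm (Fin (m + 1))) (Equiv.swap 0 ℓ) := by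
    unfold RR
    have h0 : ((0 : ℕ) : Fin (m+1)) = 0 := by simp
    rw [h0]
    apply Finset.sum_congr
    · ext ℓ
      simp only [Finset.mem_filter, Finset.mem_erase, Finset.mem_univ, true_and, and_true]
      have hiff : (ℓ = 0) ↔ (ℓ.val = 0) := by rw [Fin.ext_iff]; simp
      rw [ne_eq, hiff]
      omega
    · intros; rfl
  rw [← hJ]
  set x : JMA m := lam • (1 : JMA m) + nu • RR m 0 with hx
  by_cases hnu : nu = 0
  · have hlam : lam ≠ 0 := by
      have := h 0 (by simp)
      simpa using this
    have hx0 : x = lam • 1 := by rw [hx, hnu, zero_smul, add_zero]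
    rw [hx0]
    have : lam • (1 : JMA m) = algebraMap ℂ (JMA m) lam :=
      (Algebra.algebraMap_eq_smul_one lam).symm
    rw [this]
    exact (isUnit_iff_ne_zero.mpr hlam).map (algebraMap ℂ (JMA m))
  · set c : ℂ := -lam / nu with hc
    have hinj : Function.Injective (LinearMap.mulLeft ℂ x) := by
      by_contra hni
      have hker : LinearMap.ker (LinearMap.mulLeft ℂ x) ≠ ⊥ := by
        intro hb
        exact hni (LinearMap.ker_eq_bot.mp hb)
      obtain ⟨v, hvmem, hv0⟩ := Submodule.exists_mem_ne_zero_of_ne_bot hker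
      have hv : x * v = 0 := by
        have := LinearMap.mem_ker.mp hvmem
        rwa [LinearMap.mulLeft_apply] at this
      have hJv : RR m 0 * v = c • v := by
        have h1 : lam • v + nu • (RR m 0 * v) = 0 := by
          rw [hx] at hv
          rw [add_mul, smul_mul_assoc, smul_mul_assoc, one_mul] at hv
          exact hv
        have h2 : nu • (RR m 0 * v) = (-lam) • v := by
          rw [neg_smul]
          exact eq_neg_of_add_eq_zero_right h1
        have h3 := congrArg (fun z => nu⁻¹ • z) h2
        rw [inv_smul_smul₀ hnu, smul_smul] at h3
        rw [h3, hc]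
        congr 1
        field_simp
      set K := Module.End.eigenspace (LinearMap.mulLeft ℂ (RR m 0)) c with hK
      have hvK : v ∈ K := by
        rw [hK, Module.End.mem_eigenspace_iff, LinearMap.mulLeft_apply]
        exact hJv
      haveI : Nontrivial K :=
        Submodule.nontrivial_iff_ne_bot.mpr (Submodule.ne_bot_iff K |>.mpr ⟨v, hvK, hv0⟩)
      have hmapK : ∀ (i : Fin (m+1)) (y : JMA m), y ∈ K →
          (LinearMap.mulLeft ℂ (RR m i.val)) y ∈ K := by
        intro i y hy
        rw [hK, Module.End.mem_eigenspace_iff, LinearMap.mulLeft_apply] at hy ⊢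
        rw [LinearMap.mulLeft_apply, ← mul_assoc, RR_comm m 0 i.val (by omega) i.isLt,
          mul_assoc, hy, mul_smul_comm]
      set T : Fin (m+1) → Module.End ℂ K :=
        fun i => (LinearMap.mulLeft ℂ (RR m i.val)).restrict (hmapK i) with hT
      have hTcomm : ∀ i j, Commute (T i) (T j) := by
        intro i j
        show T i * T j = T j * T i
        refine LinearMap.ext fun y => Subtype.ext ?_
        simp only [hT, Module.End.mul_apply, LinearMap.restrict_coe_apply,
          LinearMap.mulLeft_apply]
        rw [← mul_assoc, ← mul_assoc, RR_comm m i.val j.val i.isLt j.isLt]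
      obtain ⟨w, μ, hw0, hweig⟩ := exists_common_eig (m+1) K T hTcomm
      have hw0' : (w : JMA m) ≠ 0 := fun hcon => hw0 (Subtype.ext hcon)
      set a : ℕ → ℂ := fun i => if hi : i < m+1 then μ ⟨i, hi⟩ else 0 with ha
      have hweig' : ∀ i, 0 ≤ i → i ≤ m → RR m i * (w : JMA m) = a i • (w : JMA m) := by
        intro i _ him
        have hi : i < m + 1 := by omega
        have h1 := congrArg Subtype.val (hweig ⟨i, hi⟩)
        simp only [hT, LinearMap.restrict_coe_apply, LinearMap.mulLeft_apply] at h1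
        rw [ha]
        simp only [hi, dif_pos]
        exact h1
      obtain ⟨p, hpm, hap⟩ := key m m 0 (by omega) (w : JMA m) hw0' a hweig'
      have haw : RR m 0 * (w : JMA m) = c • (w : JMA m) := by
        have h1 : (LinearMap.mulLeft ℂ (RR m 0)) (w : JMA m) = c • (w : JMA m) :=
          Module.End.mem_eigenspace_iff.mp w.2
        rwa [LinearMap.mulLeft_apply] at h1
      have ha0c : a 0 = c := by
        have h1 : a 0 • (w : JMA m) = c • (w : JMA m) := by
          rw [← hweig' 0 le_rfl (by omega), haw]
        have h2 : (a 0 - c) • (w : JMA m) = 0 := by rw [sub_smul, h1, sub_self]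
        rcases smul_eq_zero.mp h2 with h' | h'
        · exact sub_eq_zero.mp h'
        · exact absurd h' hw0'
      have hfinal : lam + (p : ℂ) * nu = 0 := by
        rw [← hap, ha0c, hc]
        field_simp
        ring
      exact h p hpm hfinal
    have hsurj := LinearMap.injective_iff_surjective.mp hinj
    obtain ⟨b, hb⟩ := hsurj 1
    rw [LinearMap.mulLeft_apply] at hb
    have hbx : b * x = 1 := by
      apply hinj
      rw [LinearMap.mulLeft_apply, LinearMap.mulLeft_apply, ← mul_assoc, hb, one_mul, mul_one]
    exact ⟨⟨x, b, hb, hbx⟩, rfl⟩
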